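/- Define the infinite binary word W = 1 0^(r(1)-1) 1 0^(r(2)-1) 1 0^(r(3)-1) ⋯, where r(k) = ν₂(k)+1 is the ruler function and 0^m denotes m zeros. Then W equals the infinite word E_∞ where E_0 = "1" and E_{n+1} = E_n ++ E_n ++ "0". -/

import Mathlib

/-- The ruler function r(k) = ν₂(k) + 1. -/
def ruler (k : ℕ) : ℕ := padicValNat 2 k + 1

/-- E_0 = "1", E_{n+1} = E_n ++ E_n ++ "0". -/
def Eword : ℕ → List ℕ
  | 0 => [1]
  | n + 1 => Eword n ++ Eword n ++ [0]

/-- The finite partial words 1 0^(r(1)-1) 1 0^(r(2)-1) ⋯ 1 0^(r(m)-1) of the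
    infinite word W. -/
def Wpartial (m : ℕ) : List ℕ :=
  ((List.range m).map fun k => 1 :: List.replicate (ruler (k + 1) - 1) 0).flatten

lemma Wpartial_succ (m : ℕ) :
    Wpartial (m + 1) = Wpartial m ++ (1 :: List.replicate (ruler (m + 1) - 1) 0) := by
  simp [Wpartial, List.range_succ]

lemma Wpartial_mono {a b : ℕ} (h : a ≤ b) : Wpartial a <+: Wpartial b := by
  induction b with
  | zero => simp_all
  | succ b ih =>
    rcases Nat.lt_or_ge a (b + 1) with h' | h'
    · exact (ih (Nat.lt_succ_iff.mp h')).trans ⟨_, (Wpartial_succ b).symm⟩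
    · have : a = b + 1 := le_antisymm h h'
      simp [this]

lemma val_add {n t : ℕ} (ht : 0 < t) (htn : t < 2 ^ n) :
    padicValNat 2 (2 ^ n + t) = padicValNat 2 t := by
  set v := padicValNat 2 t with hv
  have hdvd : 2 ^ v ∣ t := pow_padicValNat_dvd
  have hvn : v < n := by
    have h1 : 2 ^ v ≤ t := Nat.le_of_dvd ht hdvd
    exact (Nat.pow_lt_pow_iff_right one_lt_two).mp (lt_of_le_of_lt h1 htn)
  obtain ⟨u, hu⟩ := hdvd
  have hu0 : u ≠ 0 := by rintro rfl; simp at hu; omega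
  have huodd : ¬ 2 ∣ u := by
    intro ⟨w, hw⟩
    have : 2 ^ (v + 1) ∣ t := ⟨w, by rw [hu, hw]; ring⟩
    have := (padicValNat_dvd_iff_le (p := 2) (by omega)).mp this
    omega
  have key : 2 ^ n + t = 2 ^ v * (2 ^ (n - v) + u) := by
    rw [hu, Nat.mul_add, ← pow_add]
    congr 2
    omega
  have hop : ¬ 2 ∣ (2 ^ (n - v) + u) := by
    intro hd
    have : (2 : ℕ) ∣ 2 ^ (n - v) := dvd_pow_self 2 (by omega)
    exact huodd ((Nat.dvd_add_right this).mp hd)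
  rw [key, padicValNat.mul (by positivity) (by omega), padicValNat.prime_pow,
    padicValNat.eq_zero_of_not_dvd hop, add_zero]

lemma ruler_pow (n : ℕ) : ruler (2 ^ n) = n + 1 := by
  simp [ruler, padicValNat.prime_pow]

lemma Wpartial_add {n t : ℕ} (h : t < 2 ^ n) :
    Wpartial (2 ^ n + t) = Wpartial (2 ^ n) ++ Wpartial t := by
  induction t with
  | zero => simp [Wpartial]
  | succ t ih =>
    have hr : ruler (2 ^ n + t + 1) = ruler (t + 1) := by
      have := val_add (n := n) (t := t + 1) (by omega) h
      simp only [ruler, ← Nat.add_assoc] at this ⊢; omega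
    rw [show 2 ^ n + (t + 1) = (2 ^ n + t) + 1 by ring, Wpartial_succ, ih (by omega),
      Wpartial_succ, hr, List.append_assoc]

lemma Wpartial_pow_succ (n : ℕ) :
    Wpartial (2 ^ (n + 1)) = Wpartial (2 ^ n) ++ Wpartial (2 ^ n) ++ [0] := by
  have h1 : 2 ^ (n + 1) = 2 ^ n + (2 ^ n - 1) + 1 := by
    have : 0 < 2 ^ n := Nat.pow_pos (by norm_num)
    omega
  have h2 : 2 ^ n = (2 ^ n - 1) + 1 := by
    have : 0 < 2 ^ n := Nat.pow_pos (by norm_num)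
    omega
  have hr1 : ruler (2 ^ n + (2 ^ n - 1) + 1) = n + 2 := by
    rw [← h1, ruler_pow]
  have hA : Wpartial (2 ^ n) = Wpartial (2 ^ n - 1) ++ (1 :: List.replicate n 0) := by
    conv_lhs => rw [h2, Wpartial_succ, ← h2, ruler_pow]
    simp
  rw [h1, Wpartial_succ, Wpartial_add (by omega), hr1, hA]
  simp [List.replicate_succ']

lemma Eword_eq (n : ℕ) : Eword n = Wpartial (2 ^ n) := by
  induction n with
  | zero =>
    rw [show (2:ℕ) ^ 0 = 0 + 1 from rfl, Wpartial_succ]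
    simp [Wpartial, ruler, padicValNat.one, Eword]
  | succ n ih => rw [Eword, ih, Wpartial_pow_succ]

/-- The infinite word W = 1 0^(r(1)-1) 1 0^(r(2)-1) 1 0^(r(3)-1) ⋯ equals the
    infinite word E_∞ having each E_n as a prefix: every finite prefix of one is
    comparable with every finite prefix of the other. -/
theorem Winfinite_eq_Einfinite :
    ∀ m n : ℕ, Wpartial m <+: Eword n ∨ Eword n <+: Wpartial m := by
  intro m n
  rw [Eword_eq]
  rcases le_total m (2 ^ n) with h | h
  · exact Or.inl (Wpartial_mono h)
  · exact Or.inr (Wpartial_mono h)
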